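/- Fix B ≥ 2 and elevations θ_1,…,θ_m ∈ [0,π]. For every choice of azimuths φ_1,…,φ_m ∈ [0,2π) and polarizations χ_1,…,χ_m ∈ [0,2π) for which all columns of the Wigner-D sensing matrix A ∈ ℂ^{m×N}, N = B(2B−1)(2B+1)/3, are nonzero, and for all integers l ≠ r with 0 ≤ l, r ≤ B−1 and all integers k, n with |k|, |n| ≤ min(l,r), the mutual coherence satisfies μ(A) ≥ |Σ_{p=1}^m d_l^{k,n}(cos θ_p) d_r^{k,n}(cos θ_p)| / ((Σ_{p=1}^m d_l^{k,n}(cos θ_p)^2)^{1/2} · (Σ_{p=1}^m d_r^{k,n}(cos θ_p)^2)^{1/2}). -/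

import Mathlib

open scoped Real BigOperators

/-- Associated Legendre polynomial `P_l^k(x)` for integer order `k` (possibly negative). -/
noncomputable def assocLegendre (l : ℕ) (k : ℤ) (x : ℝ) : ℝ :=
  ((-1 : ℝ) ^ k / (2 ^ l * (Nat.factorial l : ℝ))) * (1 - x ^ 2) ^ ((k : ℝ) / 2) *
    iteratedDeriv (k + (l : ℤ)).toNat (fun y : ℝ => (y ^ 2 - 1) ^ l) x

/-- Normalization factor of spherical harmonics. -/
noncomputable def shNormFactor (l : ℕ) (k : ℤ) : ℝ :=
  Real.sqrt ((2 * (l : ℝ) + 1) / (4 * Real.pi) *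
    ((Nat.factorial ((l : ℤ) - k).toNat : ℝ) / (Nat.factorial ((l : ℤ) + k).toNat : ℝ)))

/-- Spherical harmonic `Y_l^k(θ,φ)`. -/
noncomputable def sphericalHarmonic (l : ℕ) (k : ℤ) (θ φ : ℝ) : ℂ :=
  ((shNormFactor l k * assocLegendre l k (Real.cos θ) : ℝ) : ℂ) *
    Complex.exp (Complex.I * (k : ℂ) * (φ : ℂ))

/-- Jacobi polynomial `P_α^{(ξ,λ)}(x)`. -/
noncomputable def jacobiP (a ξ lam : ℕ) (x : ℝ) : ℝ :=
  ((-1 : ℝ) ^ a / (2 ^ a * (Nat.factorial a : ℝ))) * (1 - x) ^ (-(ξ : ℤ)) *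
    (1 + x) ^ (-(lam : ℤ)) *
    iteratedDeriv a (fun y : ℝ => (1 - y) ^ ξ * (1 + y) ^ lam * (1 - y ^ 2) ^ a) x

/-- The coefficient `γ = α!(α+ξ+λ)!/((α+ξ)!(α+λ)!)`. -/
noncomputable def jacobiGamma (a ξ lam : ℕ) : ℝ :=
  ((Nat.factorial a : ℝ) * (Nat.factorial (a + ξ + lam) : ℝ)) /
    ((Nat.factorial (a + ξ) : ℝ) * (Nat.factorial (a + lam) : ℝ))

/-- Wigner d-function `d_l^{k,n}(cos θ)` (as a function of `θ`). -/
noncomputable def wignerd (l : ℕ) (k n : ℤ) (θ : ℝ) : ℝ :=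
  let ξ : ℕ := (k - n).natAbs
  let lam : ℕ := (k + n).natAbs
  let a : ℕ := l - (ξ + lam) / 2
  let ω : ℝ := if k ≤ n then 1 else (-1 : ℝ) ^ (n - k)
  ω * Real.sqrt (jacobiGamma a ξ lam) * (Real.sin (θ / 2)) ^ ξ * (Real.cos (θ / 2)) ^ lam *
    jacobiP a ξ lam (Real.cos θ)

/-- Wigner D-function `D_l^{k,n}(θ,φ,χ)`. -/
noncomputable def wignerD (l : ℕ) (k n : ℤ) (θ φ χ : ℝ) : ℂ :=
  ((Real.sqrt ((2 * (l : ℝ) + 1) / (8 * Real.pi ^ 2)) : ℝ) : ℂ) *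
    Complex.exp (-(Complex.I * (k : ℂ) * (φ : ℂ))) * ((wignerd l k n θ : ℝ) : ℂ) *
    Complex.exp (-(Complex.I * (n : ℂ) * (χ : ℂ)))

/-- Column index set for the spherical-harmonic sensing matrix: pairs `(l,k)`,
`0 ≤ l ≤ B-1`, `-l ≤ k ≤ l`.  It has `B^2` elements. -/
abbrev SHIndex (B : ℕ) := Σ l : Fin B, ↥(Set.Icc (-(l.1 : ℤ)) (l.1 : ℤ))

/-- Column index set for the Wigner-D sensing matrix: triples `(l,k,n)`,
`0 ≤ l ≤ B-1`, `-l ≤ k,n ≤ l`.  It has `B(2B-1)(2B+1)/3` elements. -/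
abbrev WDIndex (B : ℕ) :=
  Σ l : Fin B, ↥(Set.Icc (-(l.1 : ℤ)) (l.1 : ℤ)) × ↥(Set.Icc (-(l.1 : ℤ)) (l.1 : ℤ))

/-- The spherical-harmonic sensing matrix. -/
noncomputable def shMatrix {m : ℕ} (B : ℕ) (θ φ : Fin m → ℝ) :
    Matrix (Fin m) (SHIndex B) ℂ :=
  fun p i => sphericalHarmonic i.1.1 i.2.1 (θ p) (φ p)

/-- The Wigner-D sensing matrix. -/
noncomputable def wdMatrix {m : ℕ} (B : ℕ) (θ φ χ : Fin m → ℝ) :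
    Matrix (Fin m) (WDIndex B) ℂ :=
  fun p i => wignerD i.1.1 i.2.1.1 i.2.2.1 (θ p) (φ p) (χ p)

/-- Mutual coherence of a matrix: the supremum over pairs of distinct columns of the
normalized absolute inner product. -/
noncomputable def mutualCoherence {m : ℕ} {ι : Type*} (A : Matrix (Fin m) ι ℂ) : ℝ :=
  sSup {x : ℝ | ∃ i j : ι, i ≠ j ∧
    x = ‖∑ p, (starRingEnd ℂ) (A p i) * A p j‖ /
        (Real.sqrt (∑ p, Complex.normSq (A p i)) * Real.sqrt (∑ p, Complex.normSq (A p j)))}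



noncomputable def wc (l : ℕ) : ℝ := Real.sqrt ((2 * (l : ℝ) + 1) / (8 * Real.pi ^ 2))

lemma wc_pos (l : ℕ) : 0 < wc l := by
  apply Real.sqrt_pos.mpr
  positivity

lemma conj_mul_wd (l r : ℕ) (k n : ℤ) (θ φ χ : ℝ) :
    (starRingEnd ℂ) (wignerD l k n θ φ χ) * wignerD r k n θ φ χ =
      ((wc l * wc r * (wignerd l k n θ * wignerd r k n θ) : ℝ) : ℂ) := by
  unfold wignerD wc
  simp only [map_mul, Complex.conj_ofReal, ← Complex.exp_conj]
  push_cast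
  rw [show ∀ a b c d e f g h : ℂ, (a*b*c*d)*(e*f*g*h) = (a*e*(c*g))*((b*f)*(d*h)) by intros; ring]
  rw [← Complex.exp_add, ← Complex.exp_add]
  simp

lemma normSq_wd (l : ℕ) (k n : ℤ) (θ φ χ : ℝ) :
    Complex.normSq (wignerD l k n θ φ χ) = (wc l) ^ 2 * (wignerd l k n θ) ^ 2 := by
  unfold wignerD wc
  simp only [Complex.normSq_mul, Complex.normSq_ofReal]
  rw [show Complex.normSq (Complex.exp (-(Complex.I * (k:ℂ) * (φ:ℂ)))) = 1 by
    rw [Complex.normSq_eq_norm_sq, Complex.norm_exp]; simp]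
  rw [show Complex.normSq (Complex.exp (-(Complex.I * (n:ℂ) * (χ:ℂ)))) = 1 by
    rw [Complex.normSq_eq_norm_sq, Complex.norm_exp]; simp]
  ring

lemma coherence_set_bddAbove {m : ℕ} {ι : Type*} (A : Matrix (Fin m) ι ℂ) :
    BddAbove {x : ℝ | ∃ i j : ι, i ≠ j ∧
      x = ‖∑ p, (starRingEnd ℂ) (A p i) * A p j‖ /
          (Real.sqrt (∑ p, Complex.normSq (A p i)) * Real.sqrt (∑ p, Complex.normSq (A p j)))} := by
  refine ⟨1, ?_⟩
  rintro x ⟨i, j, hij, rfl⟩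
  set f : EuclideanSpace ℂ (Fin m) := WithLp.toLp 2 (fun p => A p i) with hf
  set g : EuclideanSpace ℂ (Fin m) := WithLp.toLp 2 (fun p => A p j) with hg
  have h1 : ‖∑ p, (starRingEnd ℂ) (A p i) * A p j‖ = ‖(inner ℂ f g : ℂ)‖ := by
    rw [PiLp.inner_apply]
    simp [f, g, RCLike.inner_apply, mul_comm]
  have h2 : Real.sqrt (∑ p, Complex.normSq (A p i)) = ‖f‖ := by
    rw [EuclideanSpace.norm_eq]
    congr 1
    refine Finset.sum_congr rfl fun p _ => ?_
    simp [f, ← Complex.sq_norm]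
  have h3 : Real.sqrt (∑ p, Complex.normSq (A p j)) = ‖g‖ := by
    rw [EuclideanSpace.norm_eq]
    congr 1
    refine Finset.sum_congr rfl fun p _ => ?_
    simp [g, ← Complex.sq_norm]
  rw [h1, h2, h3]
  exact div_le_one_of_le₀ (norm_inner_le_norm f g) (by positivity)

/-- lower bound on the mutual coherence of the Wigner-D sensing matrix
in terms of the (fixed) elevation samples only. -/
theorem wdMatrix_coherence_lower_bound (B m : ℕ) (hB : 2 ≤ B)
    (θ φ χ : Fin m → ℝ)
    (hθ : ∀ p, θ p ∈ Set.Icc 0 Real.pi) (hφ : ∀ p, φ p ∈ Set.Ico 0 (2 * Real.pi))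
    (hχ : ∀ p, χ p ∈ Set.Ico 0 (2 * Real.pi))
    (hcols : ∀ i : WDIndex B, ∃ p, wdMatrix B θ φ χ p i ≠ 0)
    (l r : ℕ) (hlr : l ≠ r) (hl : l ≤ B - 1) (hr : r ≤ B - 1)
    (k n : ℤ) (hk : k.natAbs ≤ min l r) (hn : n.natAbs ≤ min l r) :
    mutualCoherence (wdMatrix B θ φ χ) ≥
      |∑ p, wignerd l k n (θ p) * wignerd r k n (θ p)| /
        (Real.sqrt (∑ p, (wignerd l k n (θ p)) ^ 2) *
          Real.sqrt (∑ p, (wignerd r k n (θ p)) ^ 2)) := by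
  have hlB : l < B := by omega
  have hrB : r < B := by omega
  have hkl : k ∈ Set.Icc (-(l:ℤ)) (l:ℤ) := by
    simp only [Set.mem_Icc]; omega
  have hnl : n ∈ Set.Icc (-(l:ℤ)) (l:ℤ) := by
    simp only [Set.mem_Icc]; omega
  have hkr : k ∈ Set.Icc (-(r:ℤ)) (r:ℤ) := by
    simp only [Set.mem_Icc]; omega
  have hnr : n ∈ Set.Icc (-(r:ℤ)) (r:ℤ) := by
    simp only [Set.mem_Icc]; omega
  set i : WDIndex B := ⟨⟨l, hlB⟩, ⟨⟨k, hkl⟩, ⟨n, hnl⟩⟩⟩ with hi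
  set j : WDIndex B := ⟨⟨r, hrB⟩, ⟨⟨k, hkr⟩, ⟨n, hnr⟩⟩⟩ with hj
  have hij : i ≠ j := by
    intro h
    exact hlr (congrArg (fun x : WDIndex B => x.1.1) h)
  set A := wdMatrix B θ φ χ with hA
  have hAi : ∀ p, A p i = wignerD l k n (θ p) (φ p) (χ p) := fun p => rfl
  have hAj : ∀ p, A p j = wignerD r k n (θ p) (φ p) (χ p) := fun p => rfl
  have hnum : ‖∑ p, (starRingEnd ℂ) (A p i) * A p j‖ =
      wc l * wc r * |∑ p, wignerd l k n (θ p) * wignerd r k n (θ p)| := by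
    have : (∑ p, (starRingEnd ℂ) (A p i) * A p j) =
        ((wc l * wc r * ∑ p, wignerd l k n (θ p) * wignerd r k n (θ p) : ℝ) : ℂ) := by
      rw [Finset.mul_sum]
      push_cast
      refine Finset.sum_congr rfl fun p _ => ?_
      rw [hAi, hAj, conj_mul_wd]
      push_cast
      ring
    rw [this, Complex.norm_real, Real.norm_eq_abs, abs_mul, abs_mul,
      abs_of_pos (wc_pos l), abs_of_pos (wc_pos r)]
  have hden1 : Real.sqrt (∑ p, Complex.normSq (A p i)) =
      wc l * Real.sqrt (∑ p, (wignerd l k n (θ p)) ^ 2) := by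
    have : (∑ p, Complex.normSq (A p i)) = (wc l) ^ 2 * ∑ p, (wignerd l k n (θ p)) ^ 2 := by
      rw [Finset.mul_sum]
      exact Finset.sum_congr rfl fun p _ => by rw [hAi, normSq_wd]
    rw [this, Real.sqrt_mul (sq_nonneg _), Real.sqrt_sq (wc_pos l).le]
  have hden2 : Real.sqrt (∑ p, Complex.normSq (A p j)) =
      wc r * Real.sqrt (∑ p, (wignerd r k n (θ p)) ^ 2) := by
    have : (∑ p, Complex.normSq (A p j)) = (wc r) ^ 2 * ∑ p, (wignerd r k n (θ p)) ^ 2 := by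
      rw [Finset.mul_sum]
      exact Finset.sum_congr rfl fun p _ => by rw [hAj, normSq_wd]
    rw [this, Real.sqrt_mul (sq_nonneg _), Real.sqrt_sq (wc_pos r).le]
  have hmem : |∑ p, wignerd l k n (θ p) * wignerd r k n (θ p)| /
        (Real.sqrt (∑ p, (wignerd l k n (θ p)) ^ 2) *
          Real.sqrt (∑ p, (wignerd r k n (θ p)) ^ 2)) ∈
      {x : ℝ | ∃ i j : WDIndex B, i ≠ j ∧
        x = ‖∑ p, (starRingEnd ℂ) (A p i) * A p j‖ /
            (Real.sqrt (∑ p, Complex.normSq (A p i)) *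
              Real.sqrt (∑ p, Complex.normSq (A p j)))} := by
    refine ⟨i, j, hij, ?_⟩
    rw [hnum, hden1, hden2]
    rw [show wc l * Real.sqrt (∑ p, (wignerd l k n (θ p)) ^ 2) *
        (wc r * Real.sqrt (∑ p, (wignerd r k n (θ p)) ^ 2)) =
        wc l * wc r * (Real.sqrt (∑ p, (wignerd l k n (θ p)) ^ 2) *
          Real.sqrt (∑ p, (wignerd r k n (θ p)) ^ 2)) by ring]
    rw [mul_div_mul_left _ _ ((mul_pos (wc_pos l) (wc_pos r)).ne')]
  exact le_csSup (coherence_set_bddAbove A) hmem
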